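/- arXiv:1003.4107 — 2 statements merged into one kernel-verified Lean document; each statement's English description precedes it below -/
import Mathlib

section
/- Let B > 0 and let X : [0,∞) → ℝ be a continuous function with X(0) ∈ [0,B]. Then the solution (W, L, U) of the two-sided Skorokhod problem on [0,B] is unique: if (W₁, L₁, U₁) and (W₂, L₂, U₂) both satisfy W = X + L − U, L and U continuous nondecreasing with L(0) = U(0) = 0, W(t) ∈ [0,B] for all t, and L (resp. U) increases only at times t with W(t) = 0 (resp. W(t) = B), then W₁ = W₂, L₁ = L₂ and U₁ = U₂. -/
open Set

/-- `(W, L, U)` solves the two-sided Skorokhod problem on `[0, B]` for the path `X`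
(all paths are considered on the time set `[0, ∞)`). -/
def TwoSidedSkorokhod (B : ℝ) (X W L U : ℝ → ℝ) : Prop :=
  ContinuousOn W (Ici 0) ∧ ContinuousOn L (Ici 0) ∧ ContinuousOn U (Ici 0) ∧
  (∀ t ∈ Ici (0:ℝ), W t = X t + L t - U t) ∧
  L 0 = 0 ∧ U 0 = 0 ∧
  MonotoneOn L (Ici 0) ∧ MonotoneOn U (Ici 0) ∧
  (∀ t ∈ Ici (0:ℝ), W t ∈ Icc 0 B) ∧
  (∀ s ∈ Ici (0:ℝ), (∀ t, s < t → L s < L t) → W s = 0) ∧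
  (∀ s ∈ Ici (0:ℝ), (∀ t, s < t → U s < U t) → W s = B)

/-- If a nondecreasing continuous `L` increases only where `G = 0`, and `G ≠ 0`
on `(a, b]`, then `L` is flat on `[a, b]`. -/
lemma skorokhod_flat_aux {L G : ℝ → ℝ} (hLc : ContinuousOn L (Ici 0))
    (hLm : MonotoneOn L (Ici 0))
    (hinc : ∀ s ∈ Ici (0:ℝ), (∀ t, s < t → L s < L t) → G s = 0)
    {a b : ℝ} (ha : 0 ≤ a) (hab : a ≤ b) (hG : ∀ v ∈ Ioc a b, G v ≠ 0) :
    L b = L a := by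
  rcases eq_or_lt_of_le hab with rfl | hab'
  · rfl
  by_contra hne
  have hb : (0:ℝ) ≤ b := le_trans ha hab
  have hLab : L a < L b :=
    lt_of_le_of_ne (hLm ha hb hab) (fun h => hne h.symm)
  -- find a' ∈ (a, b] with L a' < L b, by continuity of L at a
  obtain ⟨a', ha'mem, hLa'⟩ : ∃ a' ∈ Ioc a b, L a' < L b := by
    have hc : ContinuousWithinAt L (Ici 0) a := hLc a ha
    rw [Metric.continuousWithinAt_iff] at hc
    obtain ⟨δ, hδ, hδ'⟩ := hc (L b - L a) (by linarith)
    refine ⟨min b (a + δ/2), ⟨lt_min hab' (by linarith), min_le_left _ _⟩, ?_⟩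
    have h1 : min b (a + δ/2) ∈ Ici (0:ℝ) := le_min hb (by linarith)
    have h2 : dist (min b (a + δ/2)) a < δ := by
      rw [Real.dist_eq, abs_lt]
      constructor
      · have := lt_min hab' (show a < a + δ/2 by linarith)
        linarith
      · have := min_le_right b (a + δ/2)
        linarith
    have := hδ' h1 h2
    rw [Real.dist_eq, abs_lt] at this
    linarith
  obtain ⟨haa', ha'b⟩ := ha'mem
  have ha'0 : (0:ℝ) ≤ a' := le_trans ha haa'.le
  -- the set of points of [a', b] where L sticks at L a'
  set S : Set ℝ := Icc a' b ∩ L ⁻¹' {L a'} with hS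
  have hSne : S.Nonempty := ⟨a', ⟨le_refl _, ha'b⟩, rfl⟩
  have hSbdd : BddAbove S := BddAbove.mono (fun x hx => hx.1) bddAbove_Icc
  have hSclosed : IsClosed S := by
    refine ContinuousOn.preimage_isClosed_of_isClosed
      (hLc.mono ?_) isClosed_Icc isClosed_singleton
    exact fun x hx => le_trans ha'0 hx.1
  have huS : sSup S ∈ S := hSclosed.csSup_mem hSne hSbdd
  set u := sSup S with hu
  obtain ⟨⟨hua', hub⟩, huL⟩ := huS
  have hu0 : (0:ℝ) ≤ u := le_trans ha'0 hua'
  have huIoc : u ∈ Ioc a b := ⟨lt_of_lt_of_le haa' hua', hub⟩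
  refine hG u huIoc (hinc u hu0 ?_)
  intro v huv
  have hLuv : L u ≤ L v := hLm hu0 (le_trans hu0 huv.le) huv.le
  rcases lt_or_ge b v with hbv | hvb
  · calc L u = L a' := by simpa using huL
    _ < L b := hLa'
    _ ≤ L v := hLm hb (le_trans hb hbv.le) hbv.le
  · rcases eq_or_lt_of_le hLuv with heq | hlt
    · exfalso
      have hvS : v ∈ S := by
        refine ⟨⟨le_trans hua' huv.le, hvb⟩, ?_⟩
        simp only [mem_preimage, mem_singleton_iff]
        rw [← heq]
        simpa using huL
      exact absurd (le_csSup hSbdd hvS) (not_le.mpr huv)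
    · exact hlt

/-- Key step: for two solutions, `W₂ t < W₁ t` is impossible. -/
lemma skorokhod_W_le (B : ℝ) (hB : 0 < B) (X : ℝ → ℝ)
    (W₁ L₁ U₁ W₂ L₂ U₂ : ℝ → ℝ)
    (h₁ : TwoSidedSkorokhod B X W₁ L₁ U₁)
    (h₂ : TwoSidedSkorokhod B X W₂ L₂ U₂)
    {t : ℝ} (ht : 0 ≤ t) : W₁ t ≤ W₂ t := by
  obtain ⟨hW₁c, hL₁c, hU₁c, hW₁eq, hL₁0, hU₁0, hL₁m, hU₁m, hW₁mem, hL₁inc, hU₁inc⟩ := h₁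
  obtain ⟨hW₂c, hL₂c, hU₂c, hW₂eq, hL₂0, hU₂0, hL₂m, hU₂m, hW₂mem, hL₂inc, hU₂inc⟩ := h₂
  by_contra hlt
  push_neg at hlt
  have hW0 : W₁ 0 = W₂ 0 := by
    rw [hW₁eq 0 Set.self_mem_Ici, hW₂eq 0 Set.self_mem_Ici, hL₁0, hU₁0, hL₂0, hU₂0]
  have hDc : ContinuousOn (fun u => W₁ u - W₂ u) (Ici 0) := hW₁c.sub hW₂c
  set S : Set ℝ := Icc 0 t ∩ (fun u => W₁ u - W₂ u) ⁻¹' {0} with hS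
  have hSne : S.Nonempty := ⟨0, ⟨le_refl _, ht⟩, by simp [hW0]⟩
  have hSbdd : BddAbove S := BddAbove.mono (fun x hx => hx.1) bddAbove_Icc
  have hSclosed : IsClosed S :=
    ContinuousOn.preimage_isClosed_of_isClosed
      (hDc.mono (fun x hx => hx.1)) isClosed_Icc isClosed_singleton
  have hsS : sSup S ∈ S := hSclosed.csSup_mem hSne hSbdd
  set s := sSup S with hsdef
  obtain ⟨⟨hs0, hst⟩, hsW⟩ := hsS
  simp only [mem_preimage, mem_singleton_iff, sub_eq_zero] at hsW
  have hst' : s < t := by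
    rcases eq_or_lt_of_le hst with heq | h
    · rw [heq] at hsW; exact absurd hsW (ne_of_gt hlt)
    · exact h
  -- On (s, t], W₁ > W₂
  have hDpos : ∀ v ∈ Ioc s t, W₂ v < W₁ v := by
    rintro v ⟨hsv, hvt⟩
    have hv0 : (0:ℝ) ≤ v := le_trans hs0 hsv.le
    have hvne : W₁ v - W₂ v ≠ 0 := by
      intro h
      have : v ∈ S := ⟨⟨hv0, hvt⟩, by simpa using h⟩
      exact absurd (le_csSup hSbdd this) (not_le.mpr hsv)
    rcases lt_or_ge (W₁ v - W₂ v) 0 with hneg | hpos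
    · exfalso
      have hsub : Icc v t ⊆ Ici (0:ℝ) := fun x hx => le_trans hv0 hx.1
      have himg := intermediate_value_Icc hvt (hDc.mono hsub)
      have h0mem : (0:ℝ) ∈ Icc (W₁ v - W₂ v) (W₁ t - W₂ t) :=
        ⟨hneg.le, by linarith⟩
      obtain ⟨z, hzmem, hz⟩ := himg h0mem
      have hzS : z ∈ S := ⟨⟨le_trans hv0 hzmem.1, hzmem.2⟩, by simpa using hz⟩
      have := le_csSup hSbdd hzS
      linarith [hzmem.1]
    · rcases eq_or_lt_of_le hpos with h | h
      · exact absurd h.symm hvne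
      · linarith
  -- L₁ and U₂ are flat on [s, t]
  have hL₁flat : L₁ t = L₁ s := by
    refine skorokhod_flat_aux hL₁c hL₁m hL₁inc hs0 hst'.le ?_
    intro v hv
    have h1 := hDpos v hv
    have h2 := (hW₂mem v (le_trans hs0 (le_of_lt hv.1))).1
    intro h; rw [h] at h1; linarith
  have hU₂flat : U₂ t = U₂ s := by
    refine skorokhod_flat_aux (L := U₂) (G := fun u => W₂ u - B)
      hU₂c hU₂m ?_ hs0 hst'.le ?_
    · intro u hu h
      have := hU₂inc u hu h
      simp [this]
    · intro v hv
      have h1 := hDpos v hv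
      have h2 := (hW₁mem v (le_trans hs0 (le_of_lt hv.1))).2
      intro h
      have : W₂ v = B := by linarith [sub_eq_zero.mp h]
      linarith
  -- monotonicity contributions
  have hL₂mono : L₂ s ≤ L₂ t := hL₂m hs0 (le_trans hs0 hst) hst
  have hU₁mono : U₁ s ≤ U₁ t := hU₁m hs0 (le_trans hs0 hst) hst
  have e₁t := hW₁eq t ht
  have e₂t := hW₂eq t ht
  have e₁s := hW₁eq s hs0
  have e₂s := hW₂eq s hs0
  linarith

/-- Uniqueness of the solution of the two-sided Skorokhod problem. -/
theorem skorokhod_unique (B : ℝ) (hB : 0 < B) (X : ℝ → ℝ)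
    (hX : ContinuousOn X (Ici 0)) (hX0 : X 0 ∈ Icc 0 B)
    (W₁ L₁ U₁ W₂ L₂ U₂ : ℝ → ℝ)
    (h₁ : TwoSidedSkorokhod B X W₁ L₁ U₁)
    (h₂ : TwoSidedSkorokhod B X W₂ L₂ U₂) :
    (∀ t ∈ Ici (0:ℝ), W₁ t = W₂ t) ∧
    (∀ t ∈ Ici (0:ℝ), L₁ t = L₂ t) ∧
    (∀ t ∈ Ici (0:ℝ), U₁ t = U₂ t) := by
  have hW : ∀ t ∈ Ici (0:ℝ), W₁ t = W₂ t := fun t ht =>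
    le_antisymm (skorokhod_W_le B hB X W₁ L₁ U₁ W₂ L₂ U₂ h₁ h₂ ht)
      (skorokhod_W_le B hB X W₂ L₂ U₂ W₁ L₁ U₁ h₂ h₁ ht)
  obtain ⟨hW₁c, hL₁c, hU₁c, hW₁eq, hL₁0, hU₁0, hL₁m, hU₁m, hW₁mem, hL₁inc, hU₁inc⟩ := h₁
  obtain ⟨hW₂c, hL₂c, hU₂c, hW₂eq, hL₂0, hU₂0, hL₂m, hU₂m, hW₂mem, hL₂inc, hU₂inc⟩ := h₂
  -- F = L₁ - L₂ = U₁ - U₂ on [0, ∞)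
  have hFU : ∀ t ∈ Ici (0:ℝ), L₁ t - L₂ t = U₁ t - U₂ t := by
    intro t ht
    have := hW t ht
    have e1 := hW₁eq t ht
    have e2 := hW₂eq t ht
    linarith
  have hL : ∀ t ∈ Ici (0:ℝ), L₁ t = L₂ t := by
    intro t ht
    by_contra hne
    have hFt : L₁ t - L₂ t ≠ 0 := sub_ne_zero.mpr hne
    have hF0 : L₁ 0 - L₂ 0 = 0 := by rw [hL₁0, hL₂0]; ring
    have hFc : ContinuousOn (fun u => L₁ u - L₂ u) (Ici 0) := hL₁c.sub hL₂c
    set S : Set ℝ := Icc 0 t ∩ (fun u => L₁ u - L₂ u) ⁻¹' {0} with hS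
    have hSne : S.Nonempty := ⟨0, ⟨le_refl _, ht⟩, by simpa using hF0⟩
    have hSbdd : BddAbove S := BddAbove.mono (fun x hx => hx.1) bddAbove_Icc
    have hSclosed : IsClosed S :=
      ContinuousOn.preimage_isClosed_of_isClosed
        (hFc.mono (fun x hx => hx.1)) isClosed_Icc isClosed_singleton
    have hsS : sSup S ∈ S := hSclosed.csSup_mem hSne hSbdd
    set s := sSup S with hsdef
    obtain ⟨⟨hs0, hst⟩, hsF⟩ := hsS
    simp only [mem_preimage, mem_singleton_iff] at hsF
    have hst' : s < t := by
      rcases eq_or_lt_of_le hst with heq | h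
      · rw [heq] at hsF; exact absurd hsF hFt
      · exact h
    have hFne : ∀ v ∈ Ioc s t, L₁ v - L₂ v ≠ 0 := by
      rintro v ⟨hsv, hvt⟩ h
      have : v ∈ S := ⟨⟨le_trans hs0 hsv.le, hvt⟩, by simpa using h⟩
      exact absurd (le_csSup hSbdd this) (not_le.mpr hsv)
    -- case split on whether W₁ s < B or W₁ s > 0
    rcases lt_or_ge (W₁ s) B with hWsB | hWsB
    · -- W₁ < B near s, so U₁, U₂ flat just after s
      have hc : ContinuousWithinAt W₁ (Ici 0) s := hW₁c s hs0
      rw [Metric.continuousWithinAt_iff] at hc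
      obtain ⟨δ, hδ, hδ'⟩ := hc (B - W₁ s) (by linarith)
      set t' := min t (s + δ/2) with ht'def
      have ht's : s < t' := lt_min hst' (by linarith)
      have ht't : t' ≤ t := min_le_left _ _
      have ht'0 : (0:ℝ) ≤ t' := le_trans hs0 ht's.le
      have hWlt : ∀ v ∈ Ioc s t', W₁ v < B := by
        rintro v ⟨hsv, hvt'⟩
        have hv0 : (0:ℝ) ≤ v := le_trans hs0 hsv.le
        have hd : dist v s < δ := by
          rw [Real.dist_eq, abs_lt]
          constructor
          · linarith
          · have := le_trans hvt' (min_le_right t (s + δ/2))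
            linarith
        have := hδ' hv0 hd
        rw [Real.dist_eq, abs_lt] at this
        linarith
      have hU₁flat : U₁ t' = U₁ s := by
        refine skorokhod_flat_aux (L := U₁) (G := fun u => W₁ u - B)
          hU₁c hU₁m ?_ hs0 ht's.le ?_
        · intro u hu h; have := hU₁inc u hu h; simp [this]
        · intro v hv h
          have := hWlt v hv
          have : W₁ v = B := by linarith [sub_eq_zero.mp h]
          linarith
      have hU₂flat : U₂ t' = U₂ s := by
        refine skorokhod_flat_aux (L := U₂) (G := fun u => W₂ u - B)
          hU₂c hU₂m ?_ hs0 ht's.le ?_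
        · intro u hu h; have := hU₂inc u hu h; simp [this]
        · intro v hv h
          have h1 := hWlt v hv
          have h2 : W₂ v = B := by linarith [sub_eq_zero.mp h]
          have h3 := hW v (le_trans hs0 hv.1.le)
          linarith
      have e1 := hFU t' ht'0
      have e2 := hFU s hs0
      exact hFne t' ⟨ht's, ht't⟩ (by linarith)
    · -- W₁ s ≥ B > 0, so W₁ > 0 near s, so L₁, L₂ flat just after s
      have hWs0 : 0 < W₁ s := lt_of_lt_of_le hB hWsB
      have hc : ContinuousWithinAt W₁ (Ici 0) s := hW₁c s hs0
      rw [Metric.continuousWithinAt_iff] at hc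
      obtain ⟨δ, hδ, hδ'⟩ := hc (W₁ s) hWs0
      set t' := min t (s + δ/2) with ht'def
      have ht's : s < t' := lt_min hst' (by linarith)
      have ht't : t' ≤ t := min_le_left _ _
      have ht'0 : (0:ℝ) ≤ t' := le_trans hs0 ht's.le
      have hWpos : ∀ v ∈ Ioc s t', 0 < W₁ v := by
        rintro v ⟨hsv, hvt'⟩
        have hv0 : (0:ℝ) ≤ v := le_trans hs0 hsv.le
        have hd : dist v s < δ := by
          rw [Real.dist_eq, abs_lt]
          constructor
          · linarith
          · have := le_trans hvt' (min_le_right t (s + δ/2))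
            linarith
        have := hδ' hv0 hd
        rw [Real.dist_eq, abs_lt] at this
        linarith
      have hL₁flat : L₁ t' = L₁ s := by
        refine skorokhod_flat_aux hL₁c hL₁m hL₁inc hs0 ht's.le ?_
        intro v hv h
        have := hWpos v hv
        linarith
      have hL₂flat : L₂ t' = L₂ s := by
        refine skorokhod_flat_aux hL₂c hL₂m hL₂inc hs0 ht's.le ?_
        intro v hv h
        have h1 := hWpos v hv
        have h2 := hW v (le_trans hs0 hv.1.le)
        linarith
      exact hFne t' ⟨ht's, ht't⟩ (by rw [hL₁flat, hL₂flat, hsF])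
  refine ⟨hW, hL, ?_⟩
  intro t ht
  have h1 := hFU t ht
  have h2 := hL t ht
  linarith
end

section
/- Let μ ∈ ℝ, q > 0, B > 0, γ = √(μ²+2q), and α ∈ ℝ with γ·coth(Bγ) ≠ μ + α. Then setting Λ⁺ = μ − γ and Λ⁻ = −μ − γ, the scalar expression (e^{−BΛ⁻} − e^{BΛ⁺})·((Λ⁻−α)⁻¹·e^{−BΛ⁻} + (Λ⁺+α)⁻¹·e^{BΛ⁺})⁻¹ equals 2·((1/2)α² + μα − q)/(γ·coth(Bγ) − (μ+α)). -/
/-- The hyperbolic cotangent. -/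
noncomputable def coth (x : ℝ) : ℝ := Real.cosh x / Real.sinh x

/-- Scalar evaluation of the inverse-local-time exponent `F^L(α, q)` for a Brownian motion
with drift `μ`, variance 1, reflected in `[0, B]`: with `Λ⁺ = μ - γ`, `Λ⁻ = -μ - γ`,
`(e^{-BΛ⁻} - e^{BΛ⁺})((Λ⁻-α)⁻¹e^{-BΛ⁻} + (Λ⁺+α)⁻¹e^{BΛ⁺})⁻¹
  = 2(½α² + μα - q)/(γ coth(Bγ) - (μ+α))`. -/
theorem scalar_exponent_evaluation (μ q B α : ℝ) (hq : 0 < q) (hB : 0 < B)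
    (γ : ℝ) (hγ : γ = Real.sqrt (μ ^ 2 + 2 * q))
    (hden : γ * coth (B * γ) ≠ μ + α)
    (hm : -μ - γ ≠ α) (hp : μ - γ ≠ -α) :
    (Real.exp (-B * (-μ - γ)) - Real.exp (B * (μ - γ))) *
        ((-μ - γ - α)⁻¹ * Real.exp (-B * (-μ - γ)) +
          (μ - γ + α)⁻¹ * Real.exp (B * (μ - γ)))⁻¹ =
      2 * ((1/2) * α ^ 2 + μ * α - q) / (γ * coth (B * γ) - (μ + α)) := by
  have hγ2 : γ ^ 2 = μ ^ 2 + 2 * q := by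
    rw [hγ]; exact Real.sq_sqrt (by nlinarith)
  have hγpos : 0 < γ := by
    rw [hγ]; exact Real.sqrt_pos.mpr (by nlinarith)
  set s := Real.sinh (B * γ) with hs
  set c := Real.cosh (B * γ) with hc
  have hspos : 0 < s := Real.sinh_pos_iff.mpr (by positivity)
  have hcs : c ^ 2 - s ^ 2 = 1 := Real.cosh_sq_sub_sinh_sq (B * γ)
  have heγ : Real.exp (B * γ) = c + s := (Real.cosh_add_sinh _).symm
  have heγ' : Real.exp (-(B * γ)) = c - s := (Real.cosh_sub_sinh _).symm
  have he1 : Real.exp (-B * (-μ - γ)) = Real.exp (B * μ) * (c + s) := by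
    rw [show -B * (-μ - γ) = B * μ + B * γ by ring, Real.exp_add, heγ]
  have he2 : Real.exp (B * (μ - γ)) = Real.exp (B * μ) * (c - s) := by
    rw [show B * (μ - γ) = B * μ + -(B * γ) by ring, Real.exp_add, heγ']
  have hE : (0:ℝ) < Real.exp (B * μ) := Real.exp_pos _
  have hm' : -μ - γ - α ≠ 0 := sub_ne_zero.mpr hm
  have hp' : μ - γ + α ≠ 0 := by intro h; exact hp (by linarith)
  have hden' : γ * c - (μ + α) * s ≠ 0 := by
    intro h
    apply hden
    rw [coth, ← hs, ← hc]
    field_simp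
    linarith
  have hR : γ * (c / s) - (μ + α) ≠ 0 := by
    intro h
    apply hden
    rw [coth, ← hs, ← hc]
    linarith
  have hkey : (-μ - γ - α)⁻¹ * (Real.exp (B * μ) * (c + s)) +
      (μ - γ + α)⁻¹ * (Real.exp (B * μ) * (c - s)) =
      Real.exp (B * μ) * (-2) * (γ * c - (μ + α) * s) /
        ((-μ - γ - α) * (μ - γ + α)) := by
    field_simp
    ring
  rw [coth, ← hs, ← hc, he1, he2, hkey, inv_div, ← mul_div_assoc]
  rw [div_eq_div_iff (mul_ne_zero (mul_ne_zero hE.ne' (by norm_num)) hden') hR]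
  field_simp
  linear_combination (2 * s * (γ * c - (μ + α) * s)) * hγ2
end
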